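/- Let N be a periodic MMB nonlinearity with period T > 0. Let u ∈ L²(ℝ) and set y(t) = N(t, u(t)) (so y is measurable and y ∈ L²(ℝ) since |y| ≤ C|u|). Then for every n ∈ ℤ, ∫_ℝ u(t + nT)·y(t) dt ≤ ∫_ℝ u(t)·y(t) dt. -/

import Mathlib

open MeasureTheory

/-- The "potential" of the nonlinearity: `Gaux N t x = ∫ s in 0..x, N t s`. -/
noncomputable def Gaux (N : ℝ → ℝ → ℝ) (t x : ℝ) : ℝ := ∫ s in (0:ℝ)..x, N t s

lemma measurable_Gaux {N : ℝ → ℝ → ℝ} (hN : Measurable (Function.uncurry N)) :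
    Measurable (Function.uncurry (Gaux N)) := by
  have hNm : Measurable fun q : (ℝ × ℝ) × ℝ => N q.1.1 q.2 :=
    hN.comp ((measurable_fst.fst).prodMk measurable_snd)
  have h1 : Measurable fun p : ℝ × ℝ => ∫ s in Set.Ioc (0:ℝ) p.2, N p.1 s := by
    have heq : ∀ p : ℝ × ℝ, (∫ s in Set.Ioc (0:ℝ) p.2, N p.1 s)
        = ∫ s : ℝ, if 0 < s ∧ s ≤ p.2 then N p.1 s else 0 := by
      intro p
      rw [← integral_indicator measurableSet_Ioc]
      congr 1; ext s; by_cases h : s ∈ Set.Ioc (0:ℝ) p.2 <;>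
        simp [Set.indicator, Set.mem_Ioc] at h ⊢ <;> simp [h]
    simp_rw [heq]
    have hm : StronglyMeasurable
        fun q : (ℝ × ℝ) × ℝ => if 0 < q.2 ∧ q.2 ≤ q.1.2 then N q.1.1 q.2 else 0 := by
      refine Measurable.stronglyMeasurable (Measurable.ite ?_ hNm measurable_const)
      exact ((measurableSet_lt measurable_const measurable_snd).inter
        (measurableSet_le measurable_snd (measurable_fst.snd)))
    exact hm.integral_prod_right'.measurable
  have h2 : Measurable fun p : ℝ × ℝ => ∫ s in Set.Ioc p.2 (0:ℝ), N p.1 s := by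
    have heq : ∀ p : ℝ × ℝ, (∫ s in Set.Ioc p.2 (0:ℝ), N p.1 s)
        = ∫ s : ℝ, if p.2 < s ∧ s ≤ 0 then N p.1 s else 0 := by
      intro p
      rw [← integral_indicator measurableSet_Ioc]
      congr 1; ext s; by_cases h : s ∈ Set.Ioc p.2 (0:ℝ) <;>
        simp [Set.indicator, Set.mem_Ioc] at h ⊢ <;> simp [h]
    simp_rw [heq]
    have hm : StronglyMeasurable
        fun q : (ℝ × ℝ) × ℝ => if q.1.2 < q.2 ∧ q.2 ≤ 0 then N q.1.1 q.2 else 0 := by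
      refine Measurable.stronglyMeasurable (Measurable.ite ?_ hNm measurable_const)
      exact ((measurableSet_lt (measurable_fst.snd) measurable_snd).inter
        (measurableSet_le measurable_snd measurable_const))
    exact hm.integral_prod_right'.measurable
  exact h1.sub h2

/-- Fenchel–Young type inequality for a monotone function. -/
lemma fenchel_Gaux {N : ℝ → ℝ → ℝ} {t : ℝ} (hmono : Monotone (N t)) (a b : ℝ) :
    (a - b) * N t b ≤ Gaux N t a - Gaux N t b := by
  have hG : Gaux N t a - Gaux N t b = ∫ s in b..a, N t s := by
    rw [Gaux, Gaux,
      intervalIntegral.integral_interval_sub_left hmono.intervalIntegrable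
        hmono.intervalIntegrable]
  rw [hG]
  rcases le_total b a with h | h
  · calc (a - b) * N t b = ∫ _ in b..a, N t b := by
          rw [intervalIntegral.integral_const, smul_eq_mul]
      _ ≤ ∫ s in b..a, N t s := by
          refine intervalIntegral.integral_mono_on h intervalIntegrable_const
            hmono.intervalIntegrable fun s hs => hmono hs.1
  · have h1 : (∫ s in a..b, N t s) ≤ ∫ _ in a..b, N t b :=
      intervalIntegral.integral_mono_on h hmono.intervalIntegrable
        intervalIntegrable_const fun s hs => hmono hs.2
    rw [intervalIntegral.integral_const, smul_eq_mul] at h1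
    rw [intervalIntegral.integral_symm]
    nlinarith
 
lemma Gaux_bound {N : ℝ → ℝ → ℝ} {C : ℝ} (hC : ∀ t x : ℝ, |N t x| ≤ C * |x|) (t x : ℝ) :
    |Gaux N t x| ≤ C * x ^ 2 := by
  have key : ‖∫ s in (0:ℝ)..x, N t s‖ ≤ C * |x| * |x - 0| := by
    refine intervalIntegral.norm_integral_le_of_norm_le_const fun s hs => ?_
    rw [Real.norm_eq_abs]
    have habs : |s| ≤ |x| := by
      rcases le_total (0:ℝ) x with hx | hx
      · rw [Set.uIoc_of_le hx] at hs
        rw [abs_of_pos hs.1, abs_of_nonneg hx]; exact hs.2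
      · rw [Set.uIoc_of_ge hx] at hs
        rw [abs_of_nonpos (hs.2), abs_of_nonpos hx]; exact neg_le_neg hs.1.le
    calc |N t s| ≤ C * |s| := hC t s
      _ ≤ C * |x| := by
          have hC0 : 0 ≤ C := by
            have := hC t 1; simpa using (abs_nonneg (N t 1)).trans this
          exact mul_le_mul_of_nonneg_left habs hC0
  rw [Real.norm_eq_abs, sub_zero] at key
  calc |Gaux N t x| ≤ C * |x| * |x| := key
    _ = C * x ^ 2 := by rw [mul_assoc, abs_mul_abs_self, sq]

lemma integrable_mul_of_memL2 {f g : ℝ → ℝ} (hf : MemLp f 2 (volume : Measure ℝ))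
    (hg : MemLp g 2 (volume : Measure ℝ)) : Integrable (fun t => f t * g t) volume := by
  refine Integrable.mono' ((hf.integrable_sq.add hg.integrable_sq).div_const 2)
    (hf.aestronglyMeasurable.mul hg.aestronglyMeasurable) ?_
  filter_upwards with t
  rw [Real.norm_eq_abs, abs_mul]
  simp only [Pi.add_apply]
  nlinarith [abs_nonneg (f t), abs_nonneg (g t), sq_abs (f t), sq_abs (g t),
    sq_nonneg (|f t| - |g t|)]

/-- A periodic memoryless, monotone and bounded (MMB) nonlinearity with period `T`:
`N : ℝ × ℝ → ℝ` is jointly measurable, `T`-periodic in its first variable,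
nondecreasing in its second variable, and bounded in the sense that
`|N(t,x)| ≤ C|x|` for some `C ≥ 0`. -/
def IsPeriodicMMB (N : ℝ → ℝ → ℝ) (T : ℝ) : Prop :=
  Measurable (Function.uncurry N) ∧
  (∀ t x : ℝ, N (t + T) x = N t x) ∧
  (∀ t : ℝ, Monotone (N t)) ∧
  ∃ C : ℝ, 0 ≤ C ∧ ∀ t x : ℝ, |N t x| ≤ C * |x|

/-- For a periodic MMB nonlinearity `N` with period `T > 0` and `u ∈ L²(ℝ)`, with
`y(t) = N(t, u(t))`, for every integer `n` we have
`∫ u(t + nT) y(t) dt ≤ ∫ u(t) y(t) dt`. -/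
theorem shifted_inner_product_le (N : ℝ → ℝ → ℝ) (T : ℝ) (hT : 0 < T)
    (hN : IsPeriodicMMB N T) (u : ℝ → ℝ) (hu : Measurable u)
    (huL2 : MemLp u 2 (volume : Measure ℝ)) (n : ℤ) :
    ∫ t : ℝ, u (t + n * T) * N t (u t) ≤ ∫ t : ℝ, u t * N t (u t) := by
  obtain ⟨hmeas, hper, hmono, C, hC0, hCb⟩ := hN
  set c : ℝ := (n : ℝ) * T with hc
  -- periodicity with period `c = n * T`
  have hperZ : ∀ t x : ℝ, N (t + c) x = N t x := by
    intro t x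
    have hp : Function.Periodic (fun s => N s x) T := fun s => hper s x
    exact (hp.int_mul n) t
  -- measurability of `y`
  have hy : Measurable fun t => N t (u t) := hmeas.comp (measurable_id.prodMk hu)
  have hyL2 : MemLp (fun t => N t (u t)) 2 (volume : Measure ℝ) := by
    refine MemLp.of_le_mul (c := C) huL2 hy.aestronglyMeasurable ?_
    filter_upwards with t
    simpa [Real.norm_eq_abs] using hCb t (u t)
  have hucm : Measurable fun t => u (t + c) := hu.comp (measurable_add_const c)
  have hucL2 : MemLp (fun t => u (t + c)) 2 (volume : Measure ℝ) :=
    huL2.comp_measurePreserving (measurePreserving_add_right volume c)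
  have hGm : Measurable (Function.uncurry (Gaux N)) := measurable_Gaux hmeas
  -- all integrability facts
  have hI1 : Integrable (fun t => u (t + c) * N t (u t)) volume :=
    integrable_mul_of_memL2 hucL2 hyL2
  have hI2 : Integrable (fun t => u t * N t (u t)) volume :=
    integrable_mul_of_memL2 huL2 hyL2
  have hI3 : Integrable (fun t => Gaux N t (u t)) volume := by
    refine Integrable.mono' (huL2.integrable_sq.const_mul C)
      ((hGm.comp (measurable_id.prodMk hu)).aestronglyMeasurable) ?_
    filter_upwards with t
    simpa [Real.norm_eq_abs] using Gaux_bound hCb t (u t)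
  have hGper : ∀ t x : ℝ, Gaux N (t + c) x = Gaux N t x := by
    intro t x
    unfold Gaux
    simp only [hperZ]
  have hcomp : (fun t => Gaux N t (u (t + c)))
      = fun t => (fun s => Gaux N s (u s)) (t + c) := by
    funext t
    exact (hGper t (u (t + c))).symm
  have hI4 : Integrable (fun t => Gaux N t (u (t + c))) volume := by
    rw [hcomp]; exact hI3.comp_add_right c
  have hshift : (∫ t : ℝ, Gaux N t (u (t + c))) = ∫ t : ℝ, Gaux N t (u t) := by
    rw [hcomp]
    exact integral_add_right_eq_self (fun s => Gaux N s (u s)) c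
  -- pointwise Fenchel–Young inequality
  have hpt : ∀ t : ℝ, u (t + c) * N t (u t)
      ≤ Gaux N t (u (t + c)) + u t * N t (u t) - Gaux N t (u t) := by
    intro t
    have := fenchel_Gaux (hmono t) (u (t + c)) (u t)
    nlinarith [this]
  calc ∫ t : ℝ, u (t + c) * N t (u t)
      ≤ ∫ t : ℝ, (Gaux N t (u (t + c)) + u t * N t (u t) - Gaux N t (u t)) :=
        integral_mono hI1 ((hI4.add hI2).sub hI3) hpt
    _ = (∫ t : ℝ, Gaux N t (u (t + c))) + (∫ t : ℝ, u t * N t (u t))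
        - ∫ t : ℝ, Gaux N t (u t) := by
        have hadd : Integrable (fun t => Gaux N t (u (t + c)) + u t * N t (u t)) volume :=
          hI4.add hI2
        rw [integral_sub hadd hI3, integral_add hI4 hI2]
    _ = ∫ t : ℝ, u t * N t (u t) := by rw [hshift]; ring
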